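/- arXiv:2508.12256 — 2 statements merged into one kernel-verified Lean document; each statement's English description precedes it below -/
import Mathlib

section
/- For any linear map E from d×d to n×n matrices and any d×d matrix ρ, the full transpose of the star product satisfies (E ⋆ ρ)^T = Ē ⋆ ρ^T, where E ⋆ ρ = (1/2){ρ ⊗ 1, J[E]} and Ē = T ∘ E ∘ T. -/
open Matrix Kronecker BigOperators

/-- The Jamiołkowski operator `J[E] = Σ_{i,j} E_{ij} ⊗ E(E_{ji})`. -/
noncomputable def jam {d n : ℕ}
    (E : Matrix (Fin d) (Fin d) ℂ →ₗ[ℂ] Matrix (Fin n) (Fin n) ℂ) :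
    Matrix (Fin d × Fin n) (Fin d × Fin n) ℂ :=
  ∑ i : Fin d, ∑ j : Fin d, single i j (1 : ℂ) ⊗ₖ E (single j i (1 : ℂ))

/-- The star product `E ⋆ ρ = (1/2){ρ ⊗ 1, J[E]}`. -/
noncomputable def starProd {d n : ℕ}
    (E : Matrix (Fin d) (Fin d) ℂ →ₗ[ℂ] Matrix (Fin n) (Fin n) ℂ)
    (ρ : Matrix (Fin d) (Fin d) ℂ) : Matrix (Fin d × Fin n) (Fin d × Fin n) ℂ :=
  (1 / 2 : ℂ) • ((ρ ⊗ₖ (1 : Matrix (Fin n) (Fin n) ℂ)) * jam E +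
    jam E * (ρ ⊗ₖ (1 : Matrix (Fin n) (Fin n) ℂ)))

/-- The conjugate map `Ē = T ∘ E ∘ T`, where `T` is the transpose map. -/
noncomputable def conjMap {d n : ℕ}
    (E : Matrix (Fin d) (Fin d) ℂ →ₗ[ℂ] Matrix (Fin n) (Fin n) ℂ) :
    Matrix (Fin d) (Fin d) ℂ →ₗ[ℂ] Matrix (Fin n) (Fin n) ℂ where
  toFun X := (E Xᵀ)ᵀ
  map_add' X Y := by simp [Matrix.transpose_add]
  map_smul' c X := by simp [Matrix.transpose_smul]

lemma stdBasisMatrix_transpose' {d : ℕ} (i j : Fin d) :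
    (single i j (1 : ℂ))ᵀ = single j i (1 : ℂ) := by
  ext a b
  simp [Matrix.single, Matrix.transpose_apply, and_comm]

lemma jam_transpose {d n : ℕ}
    (E : Matrix (Fin d) (Fin d) ℂ →ₗ[ℂ] Matrix (Fin n) (Fin n) ℂ) :
    (jam E)ᵀ = jam (conjMap E) := by
  unfold jam
  rw [Finset.sum_comm]
  simp only [Matrix.transpose_sum, ← Matrix.kroneckerMap_transpose,
    stdBasisMatrix_transpose']
  refine Finset.sum_congr rfl fun j _ => Finset.sum_congr rfl fun i _ => ?_
  simp only [conjMap, LinearMap.coe_mk, AddHom.coe_mk, stdBasisMatrix_transpose']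

/-- `(E ⋆ ρ)ᵀ = Ē ⋆ ρᵀ`. -/
theorem stmt_18 {d n : ℕ}
    (E : Matrix (Fin d) (Fin d) ℂ →ₗ[ℂ] Matrix (Fin n) (Fin n) ℂ)
    (ρ : Matrix (Fin d) (Fin d) ℂ) :
    (starProd E ρ)ᵀ = starProd (conjMap E) ρᵀ := by
  unfold starProd
  rw [Matrix.transpose_smul, Matrix.transpose_add, Matrix.transpose_mul,
    Matrix.transpose_mul, jam_transpose, ← Matrix.kroneckerMap_transpose,
    Matrix.transpose_one, add_comm]
end

section
/- Any bipartite density matrix ρ_AB with positive semi-definite partial transpose ρ_AB^{T_B} is a dual state; that is, there exists a CPTP map E such that ρ_AB = (1/2){ρ_A ⊗ 1, J[E]} with ρ_A = Tr_B[ρ_AB]. -/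
open Matrix Kronecker ComplexOrder BigOperators

/-- The partial trace over the second tensor factor. -/
noncomputable def trB {d n : ℕ} (X : Matrix (Fin d × Fin n) (Fin d × Fin n) ℂ) :
    Matrix (Fin d) (Fin d) ℂ :=
  Matrix.of fun i j => ∑ k : Fin n, X (i, k) (j, k)

/-- Partial transpose on the second tensor factor. -/
def TB {d n : ℕ} (X : Matrix (Fin d × Fin n) (Fin d × Fin n) ℂ) :
    Matrix (Fin d × Fin n) (Fin d × Fin n) ℂ :=
  Matrix.of fun p q => X (p.1, q.2) (q.1, p.2)

/-- The Choi matrix `C[E] = Σ_{i,j} E_{ij} ⊗ E(E_{ij})`. -/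
noncomputable def choi {d n : ℕ}
    (E : Matrix (Fin d) (Fin d) ℂ →ₗ[ℂ] Matrix (Fin n) (Fin n) ℂ) :
    Matrix (Fin d × Fin n) (Fin d × Fin n) ℂ :=
  ∑ i : Fin d, ∑ j : Fin d, single i j (1 : ℂ) ⊗ₖ E (single i j (1 : ℂ))

namespace Stmt19Aux

open MeasureTheory Set Real

/-! ### The improper integral `∫_0^∞ exp(-b t) dt = 1/b` -/

lemma integral_exp_neg_mul {b : ℝ} (hb : 0 < b) :
    ∫ t in Ioi (0:ℝ), Real.exp (-b * t) = 1 / b := by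
  have hd : ∀ x ∈ Ici (0:ℝ), HasDerivAt (fun t => -Real.exp (-b*t)/b)
      (Real.exp (-b*x)) x := by
    intro x _
    have h1 : HasDerivAt (fun t : ℝ => -b * t) (-b) x := by
      simpa using (hasDerivAt_id x).const_mul (-b)
    have h2 := (h1.exp).neg.div_const b
    refine h2.congr_deriv ?_
    field_simp
  have ht : Filter.Tendsto (fun t => -Real.exp (-b*t)/b) Filter.atTop (nhds (-0/b)) := by
    refine Filter.Tendsto.div_const (Filter.Tendsto.neg ?_) _
    exact tendsto_exp_atBot.comp (Filter.tendsto_id.const_mul_atTop_of_neg (by linarith))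
  have h := integral_Ioi_of_hasDerivAt_of_tendsto' hd (exp_neg_integrableOn_Ioi 0 hb) ht
  rw [h]
  rw [mul_zero, Real.exp_zero]
  field_simp
  norm_num

/-! ### The Cauchy-kernel-weighted matrix is PSD -/

lemma cauchy_psd {ι : Type*} [Fintype ι] [DecidableEq ι] (μ : ι → ℝ) (hμ : ∀ p, 0 ≤ μ p)
    (S : Matrix ι ι ℂ) (hS : S.PosSemidef)
    (h0 : ∀ p q, μ p = 0 → S p q = 0) (h0' : ∀ p q, μ q = 0 → S p q = 0) :
    (Matrix.of fun p q => if μ p + μ q = 0 then 0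
        else (2 / ((μ p : ℂ) + (μ q : ℂ))) * S p q : Matrix ι ι ℂ).PosSemidef := by
  set K : Matrix ι ι ℂ := Matrix.of fun p q => if μ p + μ q = 0 then 0
        else (2 / ((μ p : ℂ) + (μ q : ℂ))) * S p q with hK
  have hKapp : ∀ p q, K p q = if μ p + μ q = 0 then 0
        else (2 / ((μ p : ℂ) + (μ q : ℂ))) * S p q := fun p q => rfl
  refine Matrix.PosSemidef.of_dotProduct_mulVec_nonneg ?_ ?_
  · ext p q
    rw [conjTranspose_apply, hKapp, hKapp]
    by_cases h : μ q + μ p = 0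
    · rw [if_pos h, if_pos (by linarith), star_zero]
    · rw [if_neg h, if_neg (fun hc => h (by linarith)), star_mul', hS.1.apply p q]
      have hsc : star ((2 : ℂ) / ((μ q : ℂ) + (μ p : ℂ))) = 2 / ((μ p : ℂ) + (μ q : ℂ)) := by
        simp [star_div₀, Complex.star_def, map_add, Complex.conj_ofReal, add_comm]
      rw [hsc, mul_comm]
  · intro x
    set y : ℝ → ι → ℂ := fun t p => if μ p = 0 then 0 else (Real.exp (-(μ p) * t) : ℂ) * x p
      with hy
    set f : ι → ι → ℝ → ℂ := fun p q t => star (y t p) * S p q * y t q with hf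
    set G : ℝ → ℂ := fun t => star (y t) ⬝ᵥ S *ᵥ (y t) with hG
    have hfval : ∀ p q, 0 < μ p → 0 < μ q → f p q
        = fun t => (star (x p) * S p q * x q) * ((Real.exp (-(μ p + μ q) * t) : ℝ) : ℂ) := by
      intro p q hp hq
      funext t
      simp only [hf, hy]
      rw [if_neg hp.ne', if_neg hq.ne', star_mul', Complex.star_def, Complex.conj_ofReal,
        show (-(μ p + μ q) * t) = (-(μ p) * t) + (-(μ q) * t) by ring, Real.exp_add]
      push_cast
      ring
    have hint : ∀ p q, IntegrableOn (f p q) (Ioi (0:ℝ)) := by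
      intro p q
      rcases eq_or_lt_of_le (hμ p) with hp | hp
      · have hz : f p q = fun _ => (0:ℂ) := by funext t; simp [hf, hy, ← hp]
        rw [hz]; exact integrableOn_zero
      rcases eq_or_lt_of_le (hμ q) with hq | hq
      · have hz : f p q = fun _ => (0:ℂ) := by funext t; simp [hf, hy, ← hq]
        rw [hz]; exact integrableOn_zero
      rw [hfval p q hp hq]
      exact ((exp_neg_integrableOn_Ioi 0 (by linarith)).ofReal).const_mul _
    have hfint : ∀ p q, star (x p) * K p q * x q = 2 * ∫ t in Ioi (0:ℝ), f p q t := by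
      intro p q
      rcases eq_or_lt_of_le (hμ p) with hp | hp
      · have hz : f p q = fun _ => (0:ℂ) := by funext t; simp [hf, hy, ← hp]
        have hKz : K p q = 0 := by
          rw [hKapp]
          by_cases h : μ p + μ q = 0
          · rw [if_pos h]
          · rw [if_neg h, h0 p q hp.symm, mul_zero]
        rw [hz, hKz]; simp
      rcases eq_or_lt_of_le (hμ q) with hq | hq
      · have hz : f p q = fun _ => (0:ℂ) := by funext t; simp [hf, hy, ← hq]
        have hKz : K p q = 0 := by
          rw [hKapp]
          by_cases h : μ p + μ q = 0
          · rw [if_pos h]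
          · rw [if_neg h, h0' p q hq.symm, mul_zero]
        rw [hz, hKz]; simp
      · have hs : 0 < μ p + μ q := by linarith
        have hI : (∫ t in Ioi (0:ℝ), ((rexp (-(μ p + μ q) * t) : ℝ) : ℂ))
            = ((1 / (μ p + μ q) : ℝ) : ℂ) := by
          rw [← integral_exp_neg_mul hs]
          exact integral_ofReal
        rw [hfval p q hp hq, MeasureTheory.integral_const_mul, hI, hKapp, if_neg hs.ne']
        push_cast
        have hne : (μ p : ℂ) + (μ q : ℂ) ≠ 0 := by
          rw [← Complex.ofReal_add]
          exact_mod_cast Complex.ofReal_ne_zero.mpr hs.ne'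
        field_simp
    have h1 : star x ⬝ᵥ K *ᵥ x = ∑ p, ∑ q, star (x p) * K p q * x q := by
      simp [dotProduct, mulVec, Finset.mul_sum, mul_assoc]
    have h2 : ∀ t, G t = ∑ p, ∑ q, f p q t := by
      intro t
      simp [hG, hf, dotProduct, mulVec, Finset.mul_sum, mul_assoc]
    have hGint : IntegrableOn G (Ioi (0:ℝ)) := by
      have : IntegrableOn (fun t => ∑ p, ∑ q, f p q t) (Ioi (0:ℝ)) := by
        apply MeasureTheory.integrable_finset_sum
        intro p _
        apply MeasureTheory.integrable_finset_sum
        intro q _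
        exact hint p q
      exact this.congr_fun (fun t _ => (h2 t).symm) measurableSet_Ioi
    have hQ : star x ⬝ᵥ K *ᵥ x = 2 * ∫ t in Ioi (0:ℝ), G t := by
      rw [h1]
      have : ∫ t in Ioi (0:ℝ), G t = ∑ p, ∑ q, ∫ t in Ioi (0:ℝ), f p q t := by
        rw [MeasureTheory.integral_congr_ae (Filter.Eventually.of_forall fun t => h2 t)]
        rw [MeasureTheory.integral_finset_sum _ (fun p _ =>
          MeasureTheory.integrable_finset_sum _ (fun q _ => hint p q))]
        exact Finset.sum_congr rfl fun p _ =>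
          MeasureTheory.integral_finset_sum _ (fun q _ => hint p q)
      rw [this, Finset.mul_sum]
      exact Finset.sum_congr rfl fun p _ => by
        rw [Finset.mul_sum]
        exact Finset.sum_congr rfl fun q _ => hfint p q
    have hGnn : ∀ t, 0 ≤ G t := fun t => hS.dotProduct_mulVec_nonneg (y t)
    have hInn : 0 ≤ ∫ t in Ioi (0:ℝ), G t := by
      rw [Complex.nonneg_iff]
      constructor
      · have : (∫ t in Ioi (0:ℝ), G t).re = ∫ t in Ioi (0:ℝ), (G t).re := by
          rw [← RCLike.re_to_complex]
          rw [← integral_re hGint]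
          simp [RCLike.re_to_complex]
        rw [this]
        apply MeasureTheory.setIntegral_nonneg measurableSet_Ioi
        exact fun t _ => (Complex.nonneg_iff.mp (hGnn t)).1
      · have : (∫ t in Ioi (0:ℝ), G t).im = ∫ t in Ioi (0:ℝ), (G t).im := by
          rw [← RCLike.im_to_complex]
          rw [← integral_im hGint]
          simp [RCLike.im_to_complex]
        rw [this]
        symm
        apply MeasureTheory.integral_eq_zero_of_ae
        exact Filter.Eventually.of_forall fun t => (Complex.nonneg_iff.mp (hGnn t)).2.symm
    rw [hQ]
    have h2nn : (0:ℂ) ≤ 2 := by rw [Complex.nonneg_iff]; norm_num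
    exact mul_nonneg h2nn hInn

/-! ### Partial trace / partial transpose toolbox -/

variable {d n : ℕ}

lemma TB_TB (X : Matrix (Fin d × Fin n) (Fin d × Fin n) ℂ) : TB (TB X) = X := rfl

lemma TB_add (X Y : Matrix (Fin d × Fin n) (Fin d × Fin n) ℂ) :
    TB (X + Y) = TB X + TB Y := rfl

lemma TB_smul (c : ℂ) (X : Matrix (Fin d × Fin n) (Fin d × Fin n) ℂ) :
    TB (c • X) = c • TB X := rfl

lemma trB_TB (X : Matrix (Fin d × Fin n) (Fin d × Fin n) ℂ) : trB (TB X) = trB X := rfl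

lemma TB_kron_mul (A : Matrix (Fin d) (Fin d) ℂ) (X : Matrix (Fin d × Fin n) (Fin d × Fin n) ℂ) :
    TB ((A ⊗ₖ (1 : Matrix (Fin n) (Fin n) ℂ)) * X)
      = (A ⊗ₖ (1 : Matrix (Fin n) (Fin n) ℂ)) * TB X := by
  ext ⟨i, k⟩ ⟨j, l⟩
  simp [TB, mul_apply, Fintype.sum_prod_type, kroneckerMap_apply, one_apply, ite_mul,
    mul_ite, mul_zero, zero_mul, Finset.sum_ite_eq, Finset.sum_ite_eq']

lemma TB_mul_kron (A : Matrix (Fin d) (Fin d) ℂ) (X : Matrix (Fin d × Fin n) (Fin d × Fin n) ℂ) :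
    TB (X * (A ⊗ₖ (1 : Matrix (Fin n) (Fin n) ℂ)))
      = TB X * (A ⊗ₖ (1 : Matrix (Fin n) (Fin n) ℂ)) := by
  ext ⟨i, k⟩ ⟨j, l⟩
  simp [TB, mul_apply, Fintype.sum_prod_type, kroneckerMap_apply, one_apply, ite_mul,
    mul_ite, mul_zero, zero_mul, Finset.sum_ite_eq, Finset.sum_ite_eq']

lemma trB_kron_mul (A : Matrix (Fin d) (Fin d) ℂ) (X : Matrix (Fin d × Fin n) (Fin d × Fin n) ℂ) :
    trB ((A ⊗ₖ (1 : Matrix (Fin n) (Fin n) ℂ)) * X) = A * trB X := by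
  ext i j
  simp only [trB, of_apply, mul_apply, Fintype.sum_prod_type, kroneckerMap_apply, one_apply,
    ite_mul, mul_ite, mul_zero, zero_mul, one_mul, Finset.sum_ite_eq, Finset.sum_ite_eq',
    Finset.mem_univ, if_true, Finset.mul_sum, mul_one]
  rw [Finset.sum_comm]

lemma trB_mul_kron (A : Matrix (Fin d) (Fin d) ℂ) (X : Matrix (Fin d × Fin n) (Fin d × Fin n) ℂ) :
    trB (X * (A ⊗ₖ (1 : Matrix (Fin n) (Fin n) ℂ))) = trB X * A := by
  ext i j
  simp only [trB, of_apply, mul_apply, Fintype.sum_prod_type, kroneckerMap_apply, one_apply,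
    ite_mul, mul_ite, mul_zero, zero_mul, one_mul, mul_one, Finset.sum_ite_eq, Finset.sum_ite_eq',
    Finset.mem_univ, if_true, Finset.sum_mul]
  rw [Finset.sum_comm]

lemma star_kron (A : Matrix (Fin d) (Fin d) ℂ) (B : Matrix (Fin n) (Fin n) ℂ) :
    (A ⊗ₖ B)ᴴ = Aᴴ ⊗ₖ Bᴴ := by
  ext ⟨i, k⟩ ⟨j, l⟩
  simp [conjTranspose_apply, kroneckerMap_apply, mul_comm]

/-! ### The channel associated to a matrix -/

/-- The linear map whose Jamiołkowski operator is `M`. -/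
noncomputable def Emap (M : Matrix (Fin d × Fin n) (Fin d × Fin n) ℂ) :
    Matrix (Fin d) (Fin d) ℂ →ₗ[ℂ] Matrix (Fin n) (Fin n) ℂ where
  toFun X := Matrix.of fun k l => ∑ a, ∑ b, X b a * M (a, k) (b, l)
  map_add' X Y := by
    ext k l
    simp [add_mul, Finset.sum_add_distrib]
  map_smul' c X := by
    ext k l
    simp [Finset.mul_sum, mul_assoc]

lemma Emap_apply (M : Matrix (Fin d × Fin n) (Fin d × Fin n) ℂ) (X : Matrix (Fin d) (Fin d) ℂ)
    (k l : Fin n) : Emap M X k l = ∑ a, ∑ b, X b a * M (a, k) (b, l) := rfl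

lemma Emap_std (M : Matrix (Fin d × Fin n) (Fin d × Fin n) ℂ) (i j : Fin d) (k l : Fin n) :
    Emap M (single i j (1 : ℂ)) k l = M (j, k) (i, l) := by
  rw [Emap_apply]
  simp [single, ite_mul, Finset.sum_ite_eq, Finset.sum_ite_eq', ite_and]

lemma jam_Emap (M : Matrix (Fin d × Fin n) (Fin d × Fin n) ℂ) : jam (Emap M) = M := by
  ext ⟨i, k⟩ ⟨j, l⟩
  simp only [jam, Matrix.sum_apply, kroneckerMap_apply, Emap_std]
  simp [single, ite_mul, Finset.sum_ite_eq, Finset.sum_ite_eq', ite_and]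

lemma choi_Emap (M : Matrix (Fin d × Fin n) (Fin d × Fin n) ℂ) :
    choi (Emap M) = (TB M)ᵀ := by
  ext ⟨i, k⟩ ⟨j, l⟩
  simp only [choi, Matrix.sum_apply, kroneckerMap_apply, Emap_std, transpose_apply, TB]
  simp [single, ite_mul, Finset.sum_ite_eq, Finset.sum_ite_eq', ite_and]

lemma trace_Emap (M : Matrix (Fin d × Fin n) (Fin d × Fin n) ℂ) (h : trB M = 1)
    (X : Matrix (Fin d) (Fin d) ℂ) : (Emap M X).trace = X.trace := by
  have h' : ∀ a b : Fin d, (∑ k : Fin n, M (a, k) (b, k)) = if a = b then 1 else 0 := by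
    intro a b
    have := congrFun (congrFun h a) b
    simpa [trB, one_apply] using this
  simp only [Matrix.trace, diag, Emap_apply]
  rw [Finset.sum_comm]
  calc (∑ a : Fin d, ∑ k : Fin n, ∑ b : Fin d, X b a * M (a, k) (b, k))
      = ∑ a : Fin d, ∑ b : Fin d, X b a * ∑ k : Fin n, M (a, k) (b, k) := by
        congr 1; ext a; rw [Finset.sum_comm]; simp [Finset.mul_sum]
    _ = X.trace := by
        simp [h', Matrix.trace, mul_ite, Finset.sum_ite_eq]

end Stmt19Aux

open Stmt19Aux

/-- Any bipartite density matrix `ρ_AB` with positive semi-definite partial transpose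
`ρ_AB^{T_B}` is a dual state: there exists a CPTP map `E` such that
`ρ_AB = (1/2){ρ_A ⊗ 1, J[E]}` with `ρ_A = Tr_B[ρ_AB]`. -/
theorem stmt_19 {d n : ℕ} (ρAB : Matrix (Fin d × Fin n) (Fin d × Fin n) ℂ)
    (hρ : ρAB.PosSemidef) (htr : ρAB.trace = 1)
    (hPPT : (TB ρAB).PosSemidef) :
    ∃ E : Matrix (Fin d) (Fin d) ℂ →ₗ[ℂ] Matrix (Fin n) (Fin n) ℂ,
      (choi E).PosSemidef ∧
      (∀ X : Matrix (Fin d) (Fin d) ℂ, (E X).trace = X.trace) ∧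
      ρAB = (1 / 2 : ℂ) •
        ((trB ρAB ⊗ₖ (1 : Matrix (Fin n) (Fin n) ℂ)) * jam E +
          jam E * (trB ρAB ⊗ₖ (1 : Matrix (Fin n) (Fin n) ℂ))) := by
  classical
  have hn : (n : ℂ) ≠ 0 := by
    intro h0
    rw [Nat.cast_eq_zero] at h0
    subst h0
    rw [Matrix.trace] at htr
    simp [Finset.univ_eq_empty] at htr
  -- notation
  set σ : Matrix (Fin d × Fin n) (Fin d × Fin n) ℂ := TB ρAB with hσdef
  have hσpsd : σ.PosSemidef := hPPT
  set ρA : Matrix (Fin d) (Fin d) ℂ := trB ρAB with hρAdef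
  -- partial trace of a PSD matrix is PSD
  have hρApsd : ρA.PosSemidef := by
    obtain ⟨B, hB⟩ : ∃ B : Matrix (Fin d × Fin n) (Fin d × Fin n) ℂ, ρAB = Bᴴ * B := by
      open scoped MatrixOrder in
      obtain ⟨B, hB⟩ := CStarAlgebra.nonneg_iff_eq_star_mul_self.mp hρ.nonneg
      exact ⟨B, hB⟩
    have : ρA = (Matrix.of fun (pk : (Fin d × Fin n) × Fin n) (i : Fin d) => B pk.1 (i, pk.2))ᴴ
        * (Matrix.of fun (pk : (Fin d × Fin n) × Fin n) (i : Fin d) => B pk.1 (i, pk.2)) := by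
      ext i j
      simp only [hρAdef, trB, of_apply, hB, mul_apply, conjTranspose_apply,
        Fintype.sum_prod_type]
      rw [Finset.sum_comm]
      exact Finset.sum_congr rfl fun a _ => Finset.sum_comm
    rw [this]
    exact Matrix.posSemidef_conjTranspose_mul_self _
  have hρAh : ρA.IsHermitian := hρApsd.1
  set ev : Fin d → ℝ := hρAh.eigenvalues with hev
  have hevnn : ∀ i, 0 ≤ ev i := hρApsd.eigenvalues_nonneg
  set U : Matrix (Fin d) (Fin d) ℂ := (hρAh.eigenvectorUnitary : Matrix (Fin d) (Fin d) ℂ)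
    with hUdef
  set D : Matrix (Fin d) (Fin d) ℂ := diagonal (fun i => (ev i : ℂ)) with hD
  have hspec : ρA = U * D * star U := hρAh.spectral_theorem
  have hU1 : U * star U = 1 := Matrix.mem_unitaryGroup_iff.mp hρAh.eigenvectorUnitary.2
  have hU1' : star U * U = 1 := Matrix.mem_unitaryGroup_iff'.mp hρAh.eigenvectorUnitary.2
  set W : Matrix (Fin d × Fin n) (Fin d × Fin n) ℂ := U ⊗ₖ (1 : Matrix (Fin n) (Fin n) ℂ)
    with hWdef
  have hWstar : star W = (star U) ⊗ₖ (1 : Matrix (Fin n) (Fin n) ℂ) := by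
    rw [Matrix.star_eq_conjTranspose, hWdef, star_kron, conjTranspose_one,
      Matrix.star_eq_conjTranspose]
  have hWW : W * star W = 1 := by
    rw [hWstar, hWdef, ← mul_kronecker_mul, hU1, one_mul, one_kronecker_one]
  have hWW' : star W * W = 1 := by
    rw [hWstar, hWdef, ← mul_kronecker_mul, hU1', one_mul, one_kronecker_one]
  set σ' : Matrix (Fin d × Fin n) (Fin d × Fin n) ℂ := star W * σ * W with hσ'def
  have hσ'psd : σ'.PosSemidef := by
    rw [hσ'def, Matrix.star_eq_conjTranspose]
    exact hσpsd.conjTranspose_mul_mul_same W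
  have htrBσ : trB σ = ρA := trB_TB ρAB
  have htrBσ' : trB σ' = D := by
    rw [hσ'def, hWstar, hWdef, Matrix.mul_assoc, trB_kron_mul, trB_mul_kron, htrBσ, hspec]
    calc star U * (U * D * star U * U)
        = star U * (U * D * (star U * U)) := by rw [Matrix.mul_assoc (U * D)]
      _ = star U * (U * D) := by rw [hU1', Matrix.mul_one]
      _ = (star U * U) * D := by rw [Matrix.mul_assoc]
      _ = D := by rw [hU1', Matrix.one_mul]
  -- kernel of ρA kills σ'
  obtain ⟨B, hB⟩ : ∃ B : Matrix (Fin d × Fin n) (Fin d × Fin n) ℂ, σ' = Bᴴ * B := by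
    open scoped MatrixOrder in
    obtain ⟨B, hB⟩ := CStarAlgebra.nonneg_iff_eq_star_mul_self.mp hσ'psd.nonneg
    exact ⟨B, hB⟩
  have hBzero : ∀ (a : Fin d), ev a = 0 →
      ∀ (r : Fin d × Fin n) (k : Fin n), B r (a, k) = 0 := by
    intro a ha r k
    have hdiag : ∑ k : Fin n, σ' (a, k) (a, k) = 0 := by
      have h1 : trB σ' a a = D a a := by rw [htrBσ']
      have h2 : D a a = 0 := by simp [hD, diagonal_apply_eq, ha]
      calc ∑ k : Fin n, σ' (a, k) (a, k) = trB σ' a a := rfl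
        _ = 0 := by rw [h1, h2]
    have h3 : ∑ k : Fin n, ∑ r : Fin d × Fin n, star (B r (a, k)) * B r (a, k) = 0 := by
      rw [← hdiag]
      exact Finset.sum_congr rfl fun k _ => by
        rw [hB]
        simp [mul_apply, conjTranspose_apply]
    have h4 : ∀ k ∈ Finset.univ, ∀ r ∈ (Finset.univ : Finset (Fin d × Fin n)),
        star (B r (a, k)) * B r (a, k) = 0 := by
      have h5 := (Finset.sum_eq_zero_iff_of_nonneg (fun k _ =>
        Finset.sum_nonneg fun r _ => star_mul_self_nonneg (B r (a, k)))).mp h3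
      intro k hk
      exact (Finset.sum_eq_zero_iff_of_nonneg fun r _ =>
        star_mul_self_nonneg (B r (a, k))).mp (h5 k hk)
    have h6 := h4 k (Finset.mem_univ k) r (Finset.mem_univ r)
    rcases mul_eq_zero.mp h6 with h | h
    · exact star_eq_zero.mp h
    · exact h
  have hker : ∀ p q : Fin d × Fin n, ev p.1 = 0 → σ' p q = 0 := by
    rintro ⟨a, k⟩ q ha
    rw [hB]
    simp only [mul_apply, conjTranspose_apply]
    exact Finset.sum_eq_zero fun r _ => by rw [hBzero a ha r k, star_zero, zero_mul]
  have hker' : ∀ p q : Fin d × Fin n, ev q.1 = 0 → σ' p q = 0 := by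
    intro p q ha
    rw [← hσ'psd.1.apply p q, hker q p ha, star_zero]
  -- the candidate solution of the Lyapunov equation, in the eigenbasis
  set μf : Fin d × Fin n → ℝ := fun p => ev p.1 with hμf
  set C1 : Matrix (Fin d × Fin n) (Fin d × Fin n) ℂ := Matrix.of fun p q =>
    if μf p + μf q = 0 then 0 else (2 / ((μf p : ℂ) + (μf q : ℂ))) * σ' p q with hC1
  have hC1psd : C1.PosSemidef :=
    cauchy_psd μf (fun p => hevnn p.1) σ' hσ'psd (fun p q h => hker p q h)
      (fun p q h => hker' p q h)
  set C2 : Matrix (Fin d × Fin n) (Fin d × Fin n) ℂ :=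
    diagonal (fun p => if μf p = 0 then ((n : ℂ))⁻¹ else 0) with hC2
  have hC2psd : C2.PosSemidef := by
    refine Matrix.posSemidef_diagonal_iff.mpr fun p => ?_
    split
    · have : ((n : ℂ))⁻¹ = (((n : ℝ)⁻¹ : ℝ) : ℂ) := by push_cast; ring
      rw [this, Complex.zero_le_real]
      positivity
    · exact le_refl 0
  set C' : Matrix (Fin d × Fin n) (Fin d × Fin n) ℂ := C1 + C2 with hC'
  have hC'psd : C'.PosSemidef := hC1psd.add hC2psd
  set Cm : Matrix (Fin d × Fin n) (Fin d × Fin n) ℂ := W * C' * star W with hCmdef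
  have hCmpsd : Cm.PosSemidef := by
    rw [hCmdef, Matrix.star_eq_conjTranspose]
    exact hC'psd.mul_mul_conjTranspose_same W
  -- the partial trace of C' is the identity
  have htrBC' : trB C' = 1 := by
    ext a b
    have hab : trB C' a b = ∑ k : Fin n, (C1 (a, k) (b, k) + C2 (a, k) (b, k)) := rfl
    rw [hab]
    have hσsum : ∑ k : Fin n, σ' (a, k) (b, k) = D a b := by
      calc ∑ k : Fin n, σ' (a, k) (b, k) = trB σ' a b := rfl
        _ = D a b := by rw [htrBσ']
    by_cases hab' : a = b
    · subst hab'
      by_cases hz : ev a = 0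
      · have h1 : ∀ k : Fin n, C1 (a, k) (a, k) = 0 := by
          intro k
          simp only [hC1, of_apply, hμf]
          rw [if_pos (by rw [hz]; ring)]
        have h2 : ∀ k : Fin n, C2 (a, k) (a, k) = ((n : ℂ))⁻¹ := by
          intro k
          simp only [hC2, diagonal_apply_eq, hμf]
          rw [if_pos hz]
        simp only [h1, h2, zero_add, Finset.sum_const, Finset.card_univ, Fintype.card_fin,
          nsmul_eq_mul, one_apply_eq]
        field_simp
      · have hzC : ((ev a : ℂ) + (ev a : ℂ)) ≠ 0 := by
          rw [← Complex.ofReal_add]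
          exact Complex.ofReal_ne_zero.mpr (by
            have := hevnn a
            intro hc
            exact hz (by linarith))
        have h1 : ∀ k : Fin n, C1 (a, k) (a, k)
            = (2 / ((ev a : ℂ) + (ev a : ℂ))) * σ' (a, k) (a, k) := by
          intro k
          simp only [hC1, of_apply, hμf]
          rw [if_neg (by
            intro hc
            have := hevnn a
            exact hz (by linarith))]
        have h2 : ∀ k : Fin n, C2 (a, k) (a, k) = 0 := by
          intro k
          simp only [hC2, diagonal_apply_eq, hμf]
          rw [if_neg hz]
        simp only [h1, h2, add_zero, ← Finset.mul_sum, hσsum, one_apply_eq]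
        rw [hD, diagonal_apply_eq]
        field_simp
        ring
    · have h2 : ∀ k : Fin n, C2 (a, k) (b, k) = 0 := by
        intro k
        rw [hC2, diagonal_apply_ne]
        exact fun hc => hab' (congrArg Prod.fst hc)
      have hDab : D a b = 0 := by rw [hD, diagonal_apply_ne _ hab']
      have h1 : ∑ k : Fin n, C1 (a, k) (b, k) = 0 := by
        by_cases hc : ev a + ev b = 0
        · exact Finset.sum_eq_zero fun k _ => by
            simp only [hC1, of_apply, hμf]
            rw [if_pos hc]
        · have : ∑ k : Fin n, C1 (a, k) (b, k)
              = (2 / ((ev a : ℂ) + (ev b : ℂ))) * ∑ k : Fin n, σ' (a, k) (b, k) := by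
            rw [Finset.mul_sum]
            exact Finset.sum_congr rfl fun k _ => by
              simp only [hC1, of_apply, hμf]
              rw [if_neg hc]
          rw [this, hσsum, hDab, mul_zero]
      simp only [Finset.sum_add_distrib, h1, h2, Finset.sum_const, smul_zero, add_zero,
        one_apply_ne hab']
  have htrBCm : trB Cm = 1 := by
    rw [hCmdef, hWstar, hWdef, Matrix.mul_assoc, trB_kron_mul, trB_mul_kron, htrBC',
      Matrix.one_mul, hU1]
  -- the Lyapunov equation
  have hconj : ∀ X Y : Matrix (Fin d × Fin n) (Fin d × Fin n) ℂ,
      (W * X * star W) * (W * Y * star W) = W * (X * Y) * star W := by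
    intro X Y
    simp only [Matrix.mul_assoc]
    rw [← Matrix.mul_assoc (star W) W (Y * star W), hWW', Matrix.one_mul]
  have hAkron : ρA ⊗ₖ (1 : Matrix (Fin n) (Fin n) ℂ) = W * ((D ⊗ₖ 1)) * star W := by
    have h1 : (U ⊗ₖ (1 : Matrix (Fin n) (Fin n) ℂ)) * (D ⊗ₖ 1) * (star U ⊗ₖ 1)
        = (U * D * star U) ⊗ₖ (1 * 1 * 1) := by
      rw [← mul_kronecker_mul, ← mul_kronecker_mul]
    rw [hWdef, hWstar, h1, ← hspec]
    simp
  have hinner : (D ⊗ₖ (1 : Matrix (Fin n) (Fin n) ℂ)) * C' + C' * (D ⊗ₖ 1) = (2:ℂ) • σ' := by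
    have hdiag : (D ⊗ₖ (1 : Matrix (Fin n) (Fin n) ℂ))
        = diagonal (fun p : Fin d × Fin n => (ev p.1 : ℂ)) := by
      rw [hD, ← diagonal_one, diagonal_kronecker_diagonal]
      congr 1
      funext p
      simp
    rw [hdiag]
    ext p q
    simp only [Matrix.add_apply, Matrix.diagonal_mul, Matrix.mul_diagonal,
      Matrix.smul_apply, smul_eq_mul]
    by_cases h : μf p + μf q = 0
    · have hp0 : ev p.1 = 0 := by
        have := hevnn p.1; have := hevnn q.1
        simp only [hμf] at h
        linarith
      have hq0 : ev q.1 = 0 := by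
        have := hevnn p.1; have := hevnn q.1
        simp only [hμf] at h
        linarith
      rw [hker p q hp0, hp0, hq0]
      simp
    · have hC2z : C2 p q = 0 := by
        by_cases hpq : p = q
        · subst hpq
          rw [hC2, diagonal_apply_eq]
          rw [if_neg (fun hc => h (by rw [hc]; ring))]
        · rw [hC2, diagonal_apply_ne _ hpq]
      have hC1v : C1 p q = (2 / ((ev p.1 : ℂ) + (ev q.1 : ℂ))) * σ' p q := by
        simp only [hC1, of_apply, hμf]
        rw [if_neg h]
      have hC'v : C' p q = (2 / ((ev p.1 : ℂ) + (ev q.1 : ℂ))) * σ' p q := by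
        rw [hC', Matrix.add_apply, hC1v, hC2z, add_zero]
      rw [hC'v]
      have hne : (ev p.1 : ℂ) + (ev q.1 : ℂ) ≠ 0 := by
        rw [← Complex.ofReal_add]
        exact Complex.ofReal_ne_zero.mpr (by simpa [hμf] using h)
      field_simp
  have hlyap : (ρA ⊗ₖ (1 : Matrix (Fin n) (Fin n) ℂ)) * Cm
      + Cm * (ρA ⊗ₖ (1 : Matrix (Fin n) (Fin n) ℂ)) = (2:ℂ) • σ := by
    rw [hAkron, hCmdef, hconj, hconj]
    have hsum : W * ((D ⊗ₖ (1 : Matrix (Fin n) (Fin n) ℂ)) * C') * star W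
          + W * (C' * (D ⊗ₖ (1 : Matrix (Fin n) (Fin n) ℂ))) * star W
        = W * ((D ⊗ₖ (1 : Matrix (Fin n) (Fin n) ℂ)) * C'
          + C' * (D ⊗ₖ (1 : Matrix (Fin n) (Fin n) ℂ))) * star W := by
      noncomm_ring
    rw [hsum, hinner]
    have hWσ' : W * ((2:ℂ) • σ') * star W = (2:ℂ) • σ := by
      rw [Matrix.mul_smul, Matrix.smul_mul]
      congr 1
      rw [hσ'def]
      calc W * (star W * σ * W) * star W
          = (W * star W) * σ * (W * star W) := by
            simp only [Matrix.mul_assoc]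
        _ = σ := by rw [hWW, Matrix.one_mul, Matrix.mul_one]
    rw [hWσ']
  -- conclusion
  refine ⟨Emap (TB Cm), ?_, ?_, ?_⟩
  · rw [choi_Emap, TB_TB]
    exact hCmpsd.transpose
  · intro X
    exact trace_Emap _ (by rw [trB_TB, htrBCm]) X
  · rw [jam_Emap]
    have h := congrArg TB hlyap
    rw [TB_add, TB_kron_mul, TB_mul_kron, TB_smul] at h
    have hTBσ : TB σ = ρAB := rfl
    rw [hTBσ] at h
    rw [h, smul_smul]
    norm_num
end
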